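/- Path-category criterion for colimit preservation: let J be a small category and f : A → B a functor between categories having colimits of shape J. Let LPath(f) be the comma category Comma(id_B, f) and Path(f) ⊆ LPath(f) its full subcategory of objects (b, a, γ) with γ an isomorphism. Then f preserves all colimits of shape J if and only if Path(f) is closed in LPath(f) under colimits of shape J. -/

import Mathlib

open CategoryTheory CategoryTheory.Limits

namespace CategoryTheory.Limits

/-- We say that a property is closed under colimits of shape `J` if whenever all objects in a
    `J`-shaped diagram have the property, any colimit of this diagram also has the property. -/
def ClosedUnderColimitsOfShape.{u, v, w, w'} {C : Type u} [Category.{v} C] (J : Type w)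
    [Category.{w'} J] (P : C → Prop) : Prop :=
  ∀ ⦃F : J ⥤ C⦄ ⦃c : Cocone F⦄ (_hc : IsColimit c), (∀ j, P (F.obj j)) → P c.pt

end CategoryTheory.Limits

section Aux

variable {A : Type u₁} [Category.{v₁} A] {B : Type u₂} [Category.{v₂} B] (f : A ⥤ B)

/-- The canonical functor `A ⥤ Comma (𝟭 B) f` sending `a` to `(f a, a, 𝟙)`. -/
@[simps]
def pathFunctor : A ⥤ Comma (𝟭 B) f where
  obj a := ⟨f.obj a, a, 𝟙 (f.obj a)⟩
  map g := { left := f.map g, right := g, w := by simp }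

/-- `IsIso x.hom` is closed under isomorphisms in the comma category. -/
theorem isIso_hom_of_iso {x y : Comma (𝟭 B) f} (φ : x ≅ y) (hx : IsIso x.hom) :
    IsIso y.hom := by
  have w := φ.hom.w
  simp only [Functor.id_obj, Functor.id_map] at w
  have hL : IsIso φ.hom.left := inferInstance
  have : y.hom = inv φ.hom.left ≫ x.hom ≫ f.map φ.hom.right := by
    rw [← w, IsIso.inv_hom_id_assoc]
  rw [this]
  infer_instance

end Aux

/-- Path-category criterion for colimit preservation: for `f : A ⥤ B` between
categories having colimits of shape `J`, the functor `f` preserves colimits of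
shape `J` if and only if the full subcategory `Path(f)` of the comma category
`LPath(f) = Comma (𝟭 B) f`, spanned by the objects whose structure morphism is
an isomorphism, is closed under colimits of shape `J`. -/
theorem preservesColimits_iff_path_closed {A : Type u₁} [Category.{v₁} A]
    {B : Type u₂} [Category.{v₂} B] (f : A ⥤ B)
    {J : Type u₃} [SmallCategory J]
    [HasColimitsOfShape J A] [HasColimitsOfShape J B] :
    Nonempty (PreservesColimitsOfShape J f) ↔
      ClosedUnderColimitsOfShape J (fun x : Comma (𝟭 B) f => IsIso x.hom) := by
  constructor
  · rintro ⟨hp⟩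
    intro F c hc hmem
    -- explicit colimit cocone in the comma category
    let t₁ := colimit.isColimit (F ⋙ Comma.fst (𝟭 B) f)
    let t₂ := colimit.isColimit (F ⋙ Comma.snd (𝟭 B) f)
    let c₂ := colimit.cocone (F ⋙ Comma.snd (𝟭 B) f)
    let d := Comma.coconeOfPreserves F t₁ c₂
    have hd : IsColimit d := Comma.coconeOfPreservesIsColimit F t₁ t₂
    refine isIso_hom_of_iso f
      ((Cocones.forget F).mapIso (IsColimit.uniqueUpToIso hd hc)) ?_
    -- `d.pt.hom` is a comparison map between two colimit cocones
    show IsIso ((isColimitOfPreserves (𝟭 B) t₁).desc (Comma.colimitAuxiliaryCocone F c₂))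
    -- the auxiliary cocone is a colimit cocone since `f` preserves colimits
    -- and all the `(F.obj j).hom` are isomorphisms
    let α := Functor.whiskerLeft F (Comma.natTrans (𝟭 B) f)
    haveI : ∀ j, IsIso (α.app j) := fun j => hmem j
    haveI : IsIso α := NatIso.isIso_of_isIso_app α
    have hf2 : IsColimit (f.mapCocone c₂) := isColimitOfPreserves f t₂
    have haux : IsColimit (Comma.colimitAuxiliaryCocone F c₂) :=
      (IsColimit.precomposeHomEquiv (asIso α) (f.mapCocone c₂)).symm hf2
    refine ⟨haux.desc ((𝟭 B).mapCocone (colimit.cocone (F ⋙ Comma.fst (𝟭 B) f))), ?_, ?_⟩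
    · apply (isColimitOfPreserves (𝟭 B) t₁).hom_ext
      intro j
      have h1 := (isColimitOfPreserves (𝟭 B) t₁).fac (Comma.colimitAuxiliaryCocone F c₂) j
      have h2 := haux.fac ((𝟭 B).mapCocone (colimit.cocone (F ⋙ Comma.fst (𝟭 B) f))) j
      simp only [Functor.mapCocone_ι_app, Functor.id_map] at h1 h2 ⊢
      rw [← Category.assoc, h1, h2]
      simp
    · apply haux.hom_ext
      intro j
      have h1 := (isColimitOfPreserves (𝟭 B) t₁).fac (Comma.colimitAuxiliaryCocone F c₂) j
      have h2 := haux.fac ((𝟭 B).mapCocone (colimit.cocone (F ⋙ Comma.fst (𝟭 B) f))) j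
      simp only [Functor.mapCocone_ι_app, Functor.id_map] at h1 h2 ⊢
      rw [← Category.assoc, h2, h1]
      simp
      exact (Category.comp_id _).symm
  · intro h
    refine ⟨⟨fun {F} => ?_⟩⟩
    have : HasColimit F := inferInstance
    apply preservesColimit_of_preserves_colimit_cocone (colimit.isColimit F)
    -- build the explicit colimit cocone in the comma category over `F ⋙ pathFunctor f`
    let G := F ⋙ pathFunctor f
    let t₁ := colimit.isColimit (G ⋙ Comma.fst (𝟭 B) f)
    let c : Cocone (G ⋙ Comma.snd (𝟭 B) f) := colimit.cocone F
    let hcc : IsColimit c := colimit.isColimit F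
    let d := Comma.coconeOfPreserves G t₁ c
    have hd : IsColimit d := Comma.coconeOfPreservesIsColimit G t₁ hcc
    have hmem : ∀ j, IsIso ((G.obj j).hom) := fun j => by
      show IsIso (𝟙 _); infer_instance
    have hiso : IsIso d.pt.hom := h hd hmem
    -- transport the colimit along the isomorphism `d.pt.hom`
    let ψ : colimit.cocone (G ⋙ Comma.fst (𝟭 B) f) ⟶ f.mapCocone (colimit.cocone F) :=
      { hom := d.pt.hom
        w := fun j => by
          have := (isColimitOfPreserves (𝟭 B) t₁).fac (Comma.colimitAuxiliaryCocone G c) j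
          refine this.trans ?_
          simp [G, c, Comma.colimitAuxiliaryCocone, Comma.natTrans]
          exact Category.id_comp _ }
    haveI : IsIso ψ.hom := hiso
    haveI : IsIso ψ := Cocone.cocone_iso_of_hom_iso ψ
    exact IsColimit.ofIsoColimit t₁ (Cocone.ext (asIso ψ.hom) ψ.w)
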